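/- arXiv:2409.05667 — 3 statements merged into one kernel-verified Lean document; each statement's English description precedes it below -/
import Mathlib

section
/- If A is Poisson with mean r > 0 and m, m' are non-negative integers, then E[(A)_{m'} (A)_m] = Σ_{n=0}^{m} n! C(m,n) C(m',n) r^{m+m'-n}. -/
/-- Falling factorial `(a)_k` as a real number. -/
def fall (a k : ℕ) : ℝ := (a.descFactorial k : ℝ)

/-- Poisson probability mass function with mean `r`. -/
noncomputable def poissonPMF (r : ℝ) (a : ℕ) : ℝ := Real.exp (-r) * r ^ a / (Nat.factorial a : ℝ)

lemma hasSum_poissonPMF (r : ℝ) : HasSum (fun a => poissonPMF r a) 1 := by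
  have h : HasSum (fun n : ℕ => r ^ n / n.factorial) (Real.exp r) := by
    rw [Real.exp_eq_exp_ℝ]
    exact NormedSpace.expSeries_div_hasSum_exp r
  have h2 := h.mul_left (Real.exp (-r))
  have : Real.exp (-r) * Real.exp r = 1 := by
    rw [← Real.exp_add]; simp
  rw [this] at h2
  convert h2 using 2 with a
  · rfl
  unfold poissonPMF
  ring

lemma hasSum_poisson_fall (r : ℝ) (k : ℕ) :
    HasSum (fun a => poissonPMF r a * fall a k) (r ^ k) := by
  set f : ℕ → ℝ := fun a => poissonPMF r a * fall a k with hf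
  have h1 : ∀ a, f (a + k) = r ^ k * poissonPMF r a := by
    intro a
    have hfac : ((a + k).factorial : ℝ) = (a.factorial : ℝ) * ((a + 1).ascFactorial k : ℝ) := by
      exact_mod_cast (Nat.factorial_mul_ascFactorial a k).symm
    have hne : ((a + 1).ascFactorial k : ℝ) ≠ 0 := by
      exact_mod_cast (Nat.ascFactorial_pos a k).ne'
    have hne2 : (a.factorial : ℝ) ≠ 0 := by exact_mod_cast a.factorial_ne_zero
    simp only [hf, poissonPMF, fall, Nat.add_descFactorial_eq_ascFactorial]
    rw [pow_add, hfac]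
    field_simp
  have h0 : ∀ i ∈ Finset.range k, f i = 0 := by
    intro i hi
    have : i.descFactorial k = 0 :=
      Nat.descFactorial_eq_zero_iff_lt.mpr (Finset.mem_range.mp hi)
    simp [hf, fall, this]
  have h2 : HasSum (fun a => f (a + k)) (r ^ k) := by
    have := (hasSum_poissonPMF r).mul_left (r ^ k)
    simpa [h1] using this
  rw [hasSum_nat_add_iff k] at h2
  simpa [Finset.sum_eq_zero h0] using h2

lemma smeval_descPochhammer_real (k : ℕ) (x : ℝ) :
    (descPochhammer ℤ k).smeval x = (descPochhammer ℝ k).eval x := by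
  induction k with
  | zero => simp [descPochhammer_zero, Polynomial.smeval_one]
  | succ k ih =>
    rw [descPochhammer_succ_right, descPochhammer_succ_right, Polynomial.smeval_mul, ih,
      Polynomial.eval_mul]
    congr 1
    simp [Polynomial.smeval_sub, Polynomial.smeval_X, Polynomial.smeval_natCast]

lemma fall_eq_eval (a k : ℕ) : fall a k = (descPochhammer ℝ k).eval (a : ℝ) := by
  rw [fall, descPochhammer_eval_eq_descFactorial]

lemma fall_mul_eval (a m i : ℕ) :
    fall a m * (descPochhammer ℝ i).eval ((a : ℝ) - m) = fall a (m + i) := by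
  have := congrArg (Polynomial.eval (a : ℝ)) (descPochhammer_mul ℝ m i)
  rw [Polynomial.eval_mul, Polynomial.eval_comp] at this
  simpa [fall_eq_eval] using this

lemma fall_mul_fall (a m m' : ℕ) :
    fall a m' * fall a m = ∑ n ∈ Finset.range (m + 1),
      (Nat.factorial n : ℝ) * (m.choose n : ℝ) * (m'.choose n : ℝ) * fall a (m + m' - n) := by
  have hvdm := Ring.descPochhammer_smeval_add (R := ℝ) (r := (a : ℝ) - m) (s := (m : ℝ)) m'
    (Commute.all _ _)
  rw [sub_add_cancel] at hvdm
  have hLHS : (descPochhammer ℤ m').smeval ((a : ℕ) : ℝ) = fall a m' :=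
    Polynomial.descPochhammer_smeval_eq_descFactorial (a : ℕ) m'
  rw [hLHS] at hvdm
  have step : fall a m' * fall a m = ∑ ij ∈ Finset.HasAntidiagonal.antidiagonal m',
      (m'.choose ij.1 : ℝ) * (Nat.descFactorial m ij.2 : ℝ) * fall a (m + ij.1) := by
    rw [hvdm, Finset.sum_mul]
    refine Finset.sum_congr rfl fun ij _ => ?_
    rw [smeval_descPochhammer_real, Polynomial.descPochhammer_smeval_eq_descFactorial]
    rw [← fall_mul_eval a m ij.1]
    ring
  rw [step, Finset.Nat.sum_antidiagonal_eq_sum_range_succ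
    (fun i j => (m'.choose i : ℝ) * (Nat.descFactorial m j : ℝ) * fall a (m + i))]
  rw [← Finset.sum_range_reflect]
  have hL : ∀ n ∈ Finset.range (m' + 1),
      (m'.choose (m' + 1 - 1 - n) : ℝ) * (Nat.descFactorial m (m' - (m' + 1 - 1 - n)) : ℝ) *
        fall a (m + (m' + 1 - 1 - n)) =
      (Nat.factorial n : ℝ) * (m.choose n : ℝ) * (m'.choose n : ℝ) * fall a (m + m' - n) := by
    intro n hn
    have hn' : n ≤ m' := Nat.lt_succ_iff.mp (Finset.mem_range.mp hn)
    have e1 : m' + 1 - 1 - n = m' - n := by omega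
    have e2 : m' - (m' - n) = n := by omega
    have e3 : m + (m' - n) = m + m' - n := by omega
    rw [e1, e2, e3, Nat.choose_symm hn', Nat.descFactorial_eq_factorial_mul_choose]
    push_cast
    ring
  rw [Finset.sum_congr rfl hL]
  -- both sums equal the sum over range (m + m' + 1)
  have hbig : ∀ (N : ℕ), m ≤ N → m' ≤ N →
      (∑ n ∈ Finset.range (N + 1),
        (Nat.factorial n : ℝ) * (m.choose n : ℝ) * (m'.choose n : ℝ) * fall a (m + m' - n)) =
      ∑ n ∈ Finset.range (m' + 1),
        (Nat.factorial n : ℝ) * (m.choose n : ℝ) * (m'.choose n : ℝ) * fall a (m + m' - n) := by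
    intro N hm hm'
    refine (Finset.sum_subset ?_ ?_).symm
    · exact Finset.range_subset_range.mpr (by omega)
    · intro n _ hn
      have : m' < n := by
        have := Finset.mem_range.not.mp hn
        omega
      simp [Nat.choose_eq_zero_of_lt this]
  have hbig2 :
      (∑ n ∈ Finset.range (m + m' + 1),
        (Nat.factorial n : ℝ) * (m.choose n : ℝ) * (m'.choose n : ℝ) * fall a (m + m' - n)) =
      ∑ n ∈ Finset.range (m + 1),
        (Nat.factorial n : ℝ) * (m.choose n : ℝ) * (m'.choose n : ℝ) * fall a (m + m' - n) := by
    refine (Finset.sum_subset ?_ ?_).symm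
    · exact Finset.range_subset_range.mpr (by omega)
    · intro n _ hn
      have : m < n := by
        have := Finset.mem_range.not.mp hn
        omega
      simp [Nat.choose_eq_zero_of_lt this]
  rw [← hbig (m + m') (by omega) (by omega), hbig2]

/-- For `A` Poisson with mean `r > 0`,
`E[(A)_{m'} (A)_m] = Σ_{n=0}^{m} n! C(m,n) C(m',n) r^{m+m'-n}`. -/
theorem poisson_expect_descFactorial_mul (r : ℝ) (hr : 0 < r) (m m' : ℕ) :
    ∑' a : ℕ, poissonPMF r a * (fall a m' * fall a m) =
      ∑ n ∈ Finset.range (m + 1),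
        (Nat.factorial n : ℝ) * (m.choose n : ℝ) * (m'.choose n : ℝ) * r ^ (m + m' - n) := by
  have key : ∀ a : ℕ, poissonPMF r a * (fall a m' * fall a m) =
      ∑ n ∈ Finset.range (m + 1),
        (Nat.factorial n : ℝ) * (m.choose n : ℝ) * (m'.choose n : ℝ) *
          (poissonPMF r a * fall a (m + m' - n)) := by
    intro a
    rw [fall_mul_fall, Finset.mul_sum]
    exact Finset.sum_congr rfl fun n _ => by ring
  rw [tsum_congr key, Summable.tsum_finsetSum (fun n _ =>
    ((hasSum_poisson_fall r (m + m' - n)).summable.mul_left _))]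
  refine Finset.sum_congr rfl fun n _ => ?_
  rw [((hasSum_poisson_fall r (m + m' - n)).mul_left _).tsum_eq]
end

section
/- Orthogonality of the polynomials ψ_n under the Poisson distribution: if A is Poisson with mean r > 0, then E[ψ_n(A) ψ_{n'}(A)] = n! r^n if n = n', and 0 otherwise. -/
open Finset

/-- `ψ_n(a) = Σ_{k=0}^{n} C(n,k) (-r)^k (a)_{n-k}`. -/
def psi (r : ℝ) (n a : ℕ) : ℝ :=
  ∑ k ∈ Finset.range (n + 1), (n.choose k : ℝ) * (-r) ^ k * fall a (n - k)

lemma choose_trinomial {n k s : ℕ} (h : k + s ≤ n) :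
    n.choose k * (n - k).choose s = n.choose s * (n - s).choose k := by
  have hk : k ≤ n := by omega
  have hs : s ≤ n - k := by omega
  have h1 := Nat.choose_mul (n := n) hs
  rw [Nat.choose_symm hk] at h1
  rw [h1]
  congr 1
  have : n - k - s = (n - s) - k := by omega
  rw [this, Nat.choose_symm (by omega)]

lemma alt_real (m : ℕ) :
    ∑ k ∈ range (m + 1), (-1 : ℝ) ^ k * (m.choose k : ℝ) = if m = 0 then 1 else 0 := by
  have h := Int.alternating_sum_range_choose (n := m)
  have h2 : ∑ i ∈ range (m + 1), ((-1 : ℝ) ^ i * (m.choose i : ℝ))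
      = ((if m = 0 then (1 : ℤ) else 0 : ℤ) : ℝ) := by exact_mod_cast h
  rcases eq_or_ne m 0 with hm | hm <;> simp [hm] at h2 ⊢ <;> exact h2

lemma alt_sum (n s : ℕ) :
    ∑ k ∈ range (n + 1), (-1 : ℝ) ^ k * (n.choose k : ℝ) * ((n - k).choose s : ℝ)
      = if s = n then 1 else 0 := by
  rcases le_or_gt s n with hs | hs
  · have h1 : ∀ k ∈ range (n + 1),
        (-1 : ℝ) ^ k * (n.choose k : ℝ) * ((n - k).choose s : ℝ)
          = (n.choose s : ℝ) * ((-1) ^ k * ((n - s).choose k : ℝ)) := by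
      intro k hk
      rw [mem_range] at hk
      rcases le_or_gt (k + s) n with h | h
      · have hnat := choose_trinomial h
        have hc : (n.choose k : ℝ) * ((n - k).choose s : ℝ)
            = (n.choose s : ℝ) * ((n - s).choose k : ℝ) := by exact_mod_cast hnat
        linear_combination ((-1 : ℝ) ^ k) * hc
      · have e1 : (n - k).choose s = 0 := Nat.choose_eq_zero_of_lt (by omega)
        have e2 : (n - s).choose k = 0 := Nat.choose_eq_zero_of_lt (by omega)
        rw [e1, e2]; simp
    rw [Finset.sum_congr rfl h1, ← Finset.mul_sum]
    have h3 : ∑ k ∈ range (n + 1), (-1 : ℝ) ^ k * ((n - s).choose k : ℝ)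
        = ∑ k ∈ range (n - s + 1), (-1 : ℝ) ^ k * ((n - s).choose k : ℝ) := by
      refine (Finset.sum_subset (by intro x hx; rw [mem_range] at hx ⊢; omega) ?_).symm
      intro x hx hx'
      rw [mem_range] at hx hx'
      have e1 : (n - s).choose x = 0 := Nat.choose_eq_zero_of_lt (by omega)
      rw [e1]; simp
    rw [h3, alt_real]
    rcases eq_or_ne s n with h | h
    · simp [h, Nat.choose_self]
    · have : n - s ≠ 0 := by omega
      simp [h, this]
  · have h0 : ∀ k ∈ range (n + 1),
        (-1 : ℝ) ^ k * (n.choose k : ℝ) * ((n - k).choose s : ℝ) = 0 := by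
      intro k hk
      rw [mem_range] at hk
      have e1 : (n - k).choose s = 0 := Nat.choose_eq_zero_of_lt (by omega)
      rw [e1]; simp
    rw [Finset.sum_congr rfl h0]
    have : s ≠ n := by omega
    simp [this]

lemma hasSum_pmf (r : ℝ) : HasSum (poissonPMF r) 1 := by
  have h : HasSum (fun b : ℕ => r ^ b / (Nat.factorial b : ℝ)) (Real.exp r) := by
    rw [Real.exp_eq_exp_ℝ]
    exact NormedSpace.expSeries_div_hasSum_exp r
  have h2 := h.mul_left (Real.exp (-r))
  have e : Real.exp (-r) * Real.exp r = 1 := by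
    rw [← Real.exp_add]; simp
  rw [e] at h2
  convert (config := {transparency := .instances}) h2 using 2 with b
  unfold poissonPMF
  rw [mul_div_assoc]

lemma hasSum_pmf_mul (r : ℝ) (j : ℕ) (g : ℕ → ℝ) (S : ℝ)
    (h : HasSum (fun b => poissonPMF r b * g (b + j)) S) :
    HasSum (fun a => poissonPMF r a * fall a j * g a) (r ^ j * S) := by
  have hinj : Function.Injective (fun b : ℕ => b + j) := fun a b hab => by simpa using hab
  rw [← Function.Injective.hasSum_iff hinj]
  · have h2 := h.mul_left (r ^ j)
    convert (config := {transparency := .instances}) h2 using 2 with b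
    show poissonPMF r (b + j) * fall (b + j) j * g (b + j) = r ^ j * (poissonPMF r b * g (b + j))
    have key : poissonPMF r (b + j) * fall (b + j) j = r ^ j * poissonPMF r b := by
      unfold poissonPMF fall
      rw [Nat.descFactorial_eq_factorial_mul_choose]
      have hfac : ((b + j).choose j : ℝ) * (Nat.factorial b : ℝ) * (Nat.factorial j : ℝ)
          = ((b + j).factorial : ℝ) := by
        exact_mod_cast congrArg (Nat.cast : ℕ → ℝ) (Nat.add_choose_mul_factorial_mul_factorial b j)
      have hb : (Nat.factorial b : ℝ) ≠ 0 := Nat.cast_ne_zero.mpr (Nat.factorial_ne_zero b)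
      have hj : (Nat.factorial j : ℝ) ≠ 0 := Nat.cast_ne_zero.mpr (Nat.factorial_ne_zero j)
      have hbj : ((b + j).factorial : ℝ) ≠ 0 := Nat.cast_ne_zero.mpr (Nat.factorial_ne_zero _)
      field_simp
      rw [pow_add]
      rw [← hfac]; push_cast; ring
    linear_combination g (b + j) * key
  · intro x hx
    have hlt : x < j := by
      by_contra hc
      exact hx ⟨x - j, by simp; omega⟩
    have : fall x j = 0 := by
      unfold fall
      rw [Nat.descFactorial_eq_zero_iff_lt.mpr hlt]
      simp
    rw [this]; ring_nf

lemma hasSum_pmf_fall (r : ℝ) (j : ℕ) :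
    HasSum (fun a => poissonPMF r a * fall a j) (r ^ j) := by
  have := hasSum_pmf_mul r j (fun _ => 1) 1 (by simpa using hasSum_pmf r)
  simpa using this

lemma descFactorial_add (a t j : ℕ) :
    (a + t).descFactorial j
      = ∑ s ∈ range (j + 1), j.choose s * a.descFactorial s * t.descFactorial (j - s) := by
  rw [Nat.descFactorial_eq_factorial_mul_choose, Nat.add_choose_eq,
    Finset.Nat.sum_antidiagonal_eq_sum_range_succ_mk, Finset.mul_sum]
  refine Finset.sum_congr rfl fun s hs => ?_
  rw [mem_range] at hs
  have hsj : s ≤ j := by omega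
  rw [Nat.descFactorial_eq_factorial_mul_choose a, Nat.descFactorial_eq_factorial_mul_choose t,
    ← Nat.choose_mul_factorial_mul_factorial hsj]
  ring

lemma fall_add (a t j : ℕ) :
    fall (a + t) j = ∑ s ∈ range (j + 1), (j.choose s : ℝ) * fall a s * fall t (j - s) := by
  unfold fall
  rw [descFactorial_add a t j]
  push_cast
  rfl

lemma T_eq (r : ℝ) (m t : ℕ) :
    ∑ k ∈ range (m + 1), ∑ s ∈ range (m - k + 1),
      (m.choose k : ℝ) * (-r) ^ k * ((m - k).choose s : ℝ) * fall t (m - k - s) * r ^ s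
    = fall t m := by
  have step1 : ∀ k ∈ range (m + 1),
      ∑ s ∈ range (m - k + 1),
        (m.choose k : ℝ) * (-r) ^ k * ((m - k).choose s : ℝ) * fall t (m - k - s) * r ^ s
      = ∑ u ∈ range (m + 1),
        (m.choose k : ℝ) * (-r) ^ k * ((m - k).choose u : ℝ) * fall t u * r ^ (m - k - u) := by
    intro k hk
    rw [mem_range] at hk
    have A := (Finset.sum_range_reflect
      (fun s => (m.choose k : ℝ) * (-r) ^ k * ((m - k).choose s : ℝ) * fall t (m - k - s) * r ^ s)
      (m - k + 1)).symm
    rw [A]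
    have B : ∀ u ∈ range (m - k + 1),
        (m.choose k : ℝ) * (-r) ^ k * ((m - k).choose (m - k + 1 - 1 - u) : ℝ)
            * fall t (m - k - (m - k + 1 - 1 - u)) * r ^ (m - k + 1 - 1 - u)
        = (m.choose k : ℝ) * (-r) ^ k * ((m - k).choose u : ℝ) * fall t u * r ^ (m - k - u) := by
      intro u hu
      rw [mem_range] at hu
      have e1 : m - k + 1 - 1 - u = m - k - u := by omega
      have e2 : m - k - (m - k - u) = u := by omega
      have e3 : (m - k).choose (m - k - u) = (m - k).choose u := Nat.choose_symm (by omega)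
      rw [e1, e2, e3]
    rw [Finset.sum_congr rfl B]
    refine Finset.sum_subset (by intro x hx; rw [mem_range] at hx ⊢; omega) ?_
    intro x hx hx'
    rw [mem_range] at hx hx'
    have e1 : (m - k).choose x = 0 := Nat.choose_eq_zero_of_lt (by omega)
    rw [e1]; simp
  rw [Finset.sum_congr rfl step1, Finset.sum_comm]
  have step2 : ∀ u ∈ range (m + 1),
      ∑ k ∈ range (m + 1),
        (m.choose k : ℝ) * (-r) ^ k * ((m - k).choose u : ℝ) * fall t u * r ^ (m - k - u)
      = (if u = m then (1 : ℝ) else 0) * (r ^ (m - u) * fall t u) := by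
    intro u hu
    have e : ∀ k ∈ range (m + 1),
        (m.choose k : ℝ) * (-r) ^ k * ((m - k).choose u : ℝ) * fall t u * r ^ (m - k - u)
        = ((-1 : ℝ) ^ k * (m.choose k : ℝ) * ((m - k).choose u : ℝ)) * (r ^ (m - u) * fall t u) := by
      intro k hk
      rw [mem_range] at hk
      rcases le_or_gt (k + u) m with h | h
      · rw [neg_pow]
        have hexp : r ^ k * r ^ (m - k - u) = r ^ (m - u) := by
          rw [← pow_add]; congr 1; omega
        calc (m.choose k : ℝ) * ((-1 : ℝ) ^ k * r ^ k) * ((m - k).choose u : ℝ) * fall t u * r ^ (m - k - u)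
            = ((-1 : ℝ) ^ k * (m.choose k : ℝ) * ((m - k).choose u : ℝ)) * ((r ^ k * r ^ (m - k - u)) * fall t u) := by ring
          _ = ((-1 : ℝ) ^ k * (m.choose k : ℝ) * ((m - k).choose u : ℝ)) * (r ^ (m - u) * fall t u) := by rw [hexp]
      · have e1 : (m - k).choose u = 0 := Nat.choose_eq_zero_of_lt (by omega)
        rw [e1]; push_cast; ring
    rw [Finset.sum_congr rfl e, ← Finset.sum_mul, alt_sum m u]
  rw [Finset.sum_congr rfl step2]
  have e4 : ∀ u ∈ range (m + 1),
      (if u = m then (1 : ℝ) else 0) * (r ^ (m - u) * fall t u)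
      = if u = m then r ^ (m - u) * fall t u else 0 := by
    intro u _
    split <;> simp
  rw [Finset.sum_congr rfl e4, Finset.sum_ite_eq' (range (m + 1)) m]
  simp

lemma hasSum_pmf_psi_shift (r : ℝ) (m t : ℕ) :
    HasSum (fun a => poissonPMF r a * psi r m (a + t)) (fall t m) := by
  have H : HasSum
      (fun a => ∑ k ∈ range (m + 1), ∑ s ∈ range (m - k + 1),
        (m.choose k : ℝ) * (-r) ^ k * ((m - k).choose s : ℝ) * fall t (m - k - s)
          * (poissonPMF r a * fall a s))
      (∑ k ∈ range (m + 1), ∑ s ∈ range (m - k + 1),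
        (m.choose k : ℝ) * (-r) ^ k * ((m - k).choose s : ℝ) * fall t (m - k - s) * r ^ s) := by
    refine hasSum_sum fun k hk => hasSum_sum fun s hs => ?_
    exact (hasSum_pmf_fall r s).mul_left _
  rw [T_eq r m t] at H
  convert H using 2 with a
  unfold psi
  rw [Finset.mul_sum]
  refine Finset.sum_congr rfl fun k hk => ?_
  rw [fall_add a t (m - k), Finset.mul_sum, Finset.mul_sum]
  refine Finset.sum_congr rfl fun s hs => ?_
  ring

/-- Orthogonality: for `A` Poisson with mean `r > 0`,
`E[ψ_n(A) ψ_{n'}(A)] = n! r^n δ_{n,n'}`. -/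
theorem poisson_psi_orthogonal (r : ℝ) (hr : 0 < r) (n n' : ℕ) :
    ∑' a : ℕ, poissonPMF r a * (psi r n a * psi r n' a) =
      if n = n' then (Nat.factorial n : ℝ) * r ^ n else 0 := by
  have H1 : HasSum
      (fun a => ∑ k ∈ range (n + 1),
        (n.choose k : ℝ) * (-r) ^ k * (poissonPMF r a * fall a (n - k) * psi r n' a))
      (∑ k ∈ range (n + 1),
        (n.choose k : ℝ) * (-r) ^ k * (r ^ (n - k) * fall (n - k) n')) := by
    refine hasSum_sum fun k hk => ?_
    exact (hasSum_pmf_mul r (n - k) (psi r n') _ (hasSum_pmf_psi_shift r n' (n - k))).mul_left _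
  have H : HasSum (fun a => poissonPMF r a * (psi r n a * psi r n' a))
      (∑ k ∈ range (n + 1),
        (n.choose k : ℝ) * (-r) ^ k * (r ^ (n - k) * fall (n - k) n')) := by
    convert H1 using 2 with a
    show poissonPMF r a * (psi r n a * psi r n' a) = _
    conv_lhs => rw [psi]
    rw [Finset.sum_mul, Finset.mul_sum]
    refine Finset.sum_congr rfl fun k hk => ?_
    ring
  rw [H.tsum_eq]
  have e : ∀ k ∈ range (n + 1),
      (n.choose k : ℝ) * (-r) ^ k * (r ^ (n - k) * fall (n - k) n')
      = ((Nat.factorial n' : ℝ) * r ^ n)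
          * ((-1 : ℝ) ^ k * (n.choose k : ℝ) * ((n - k).choose n' : ℝ)) := by
    intro k hk
    rw [mem_range] at hk
    unfold fall
    rw [Nat.descFactorial_eq_factorial_mul_choose, neg_pow]
    have hexp : r ^ k * r ^ (n - k) = r ^ n := by rw [← pow_add]; congr 1; omega
    push_cast
    calc (n.choose k : ℝ) * ((-1 : ℝ) ^ k * r ^ k)
          * (r ^ (n - k) * ((Nat.factorial n' : ℝ) * ((n - k).choose n' : ℝ)))
        = ((Nat.factorial n' : ℝ) * (r ^ k * r ^ (n - k)))
            * ((-1 : ℝ) ^ k * (n.choose k : ℝ) * ((n - k).choose n' : ℝ)) := by ring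
      _ = ((Nat.factorial n' : ℝ) * r ^ n)
            * ((-1 : ℝ) ^ k * (n.choose k : ℝ) * ((n - k).choose n' : ℝ)) := by rw [hexp]
  rw [Finset.sum_congr rfl e, ← Finset.mul_sum, alt_sum n n']
  rcases eq_or_ne n n' with h | h
  · subst h; simp
  · simp [h, Ne.symm h]
end

section
/- The polynomials ψ_n are eigenfunctions of the operator S defined by (S f)(a) = (γ_A/γ_B)(a·(f(a-1) - f(a)) + r·(f(a+1) - f(a))): for every n ≥ 0, (S ψ_n)(a) = -(n γ_A/γ_B) ψ_n(a) for all a ∈ ℤ_{≥0}. -/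
/-- The operator `(S f)(a) = (γ_A/γ_B)[a (f(a-1) - f(a)) + r (f(a+1) - f(a))]`;
at `a = 0` the coefficient `a` annihilates the `f(a-1)` term. -/
noncomputable def Sop (γA γB r : ℝ) (f : ℕ → ℝ) (a : ℕ) : ℝ :=
  (γA / γB) * ((a : ℝ) * (f (a - 1) - f a) + r * (f (a + 1) - f a))

lemma descFact_succ_real (a k : ℕ) :
    (a.descFactorial (k+1) : ℝ) = ((a:ℝ) - k) * a.descFactorial k := by
  rcases le_or_gt k a with h | h
  · rw [Nat.descFactorial_succ]
    push_cast [h]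
    ring
  · rw [Nat.descFactorial_eq_zero_iff_lt.2 h,
        Nat.descFactorial_eq_zero_iff_lt.2 (h.trans (Nat.lt_succ_self k))]
    simp

lemma key1 (a k : ℕ) : (a:ℝ) * (fall (a-1) k - fall a k) = -(k:ℝ) * fall a k := by
  cases a with
  | zero => cases k <;> simp [fall]
  | succ a' =>
    simp only [fall, Nat.succ_sub_one]
    have h1 : ((a'+1:ℕ):ℝ) * (a'.descFactorial k : ℝ)
        = ((a'+1).descFactorial (k+1) : ℝ) := by
      rw [Nat.succ_descFactorial_succ]; push_cast; ring
    have h2 := descFact_succ_real (a'+1) k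
    push_cast at h1 h2 ⊢
    linear_combination h1 + h2

lemma key2 (a k : ℕ) : fall (a+1) k - fall a k = (k:ℝ) * fall a (k-1) := by
  cases k with
  | zero => simp [fall]
  | succ k' =>
    simp only [fall, Nat.succ_sub_one]
    have h1 : ((a+1).descFactorial (k'+1) : ℝ) = ((a:ℝ)+1) * a.descFactorial k' := by
      rw [Nat.succ_descFactorial_succ]; push_cast; ring
    have h2 := descFact_succ_real a k'
    push_cast
    linear_combination h1 - h2

/-- The `ψ_n` are eigenfunctions of `S` with eigenvalues `-n γ_A/γ_B`. -/
theorem psi_eigenfunction (γA γB r : ℝ) (hγA : 0 < γA) (hγB : 0 < γB) (hr : 0 < r)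
    (n : ℕ) (a : ℕ) :
    Sop γA γB r (psi r n) a = -((n : ℝ) * γA / γB) * psi r n a := by
  have hA : (a:ℝ) * (psi r n (a-1) - psi r n a)
      = ∑ k ∈ Finset.range (n+1),
          (n.choose k : ℝ) * (-r)^k * (-(((n-k:ℕ)):ℝ) * fall a (n-k)) := by
    simp only [psi, ← Finset.sum_sub_distrib, Finset.mul_sum]
    refine Finset.sum_congr rfl fun k _ => ?_
    linear_combination ((n.choose k : ℝ) * (-r)^k) * key1 a (n-k)
  have hB : r * (psi r n (a+1) - psi r n a)
      = ∑ k ∈ Finset.range (n+1),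
          (n.choose k : ℝ) * (-r)^k * (r * (((n-k:ℕ)):ℝ) * fall a (n-k-1)) := by
    simp only [psi, ← Finset.sum_sub_distrib, Finset.mul_sum]
    refine Finset.sum_congr rfl fun k _ => ?_
    linear_combination ((n.choose k : ℝ) * (-r)^k * r) * key2 a (n-k)
  have hsum : ∑ k ∈ Finset.range (n+1),
        (n.choose k : ℝ) * (-r)^k * (r * (((n-k:ℕ)):ℝ) * fall a (n-k-1))
      = ∑ k ∈ Finset.range (n+1),
        (n.choose k : ℝ) * (-r)^k * (-(k:ℝ) * fall a (n-k)) := by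
    rw [Finset.sum_range_succ, Finset.sum_range_succ']
    simp only [Nat.sub_self, Nat.cast_zero, mul_zero, zero_mul, add_zero, neg_zero,
      pow_zero, Nat.choose_zero_right, Nat.cast_one, one_mul, mul_one]
    refine Finset.sum_congr rfl fun k hk => ?_
    have hk' : k < n := Finset.mem_range.1 hk
    have hchoose : (n.choose (k+1) : ℝ) * ((k:ℝ)+1) = (n.choose k : ℝ) * ((n:ℝ) - k) := by
      have h := Nat.choose_succ_right_eq n k
      have h2 : ((n.choose (k+1) * (k+1) : ℕ) : ℝ) = ((n.choose k * (n - k) : ℕ) : ℝ) := by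
        rw [h]
      push_cast [Nat.cast_sub hk'.le] at h2
      linarith [h2]
    have hidx : n - (k+1) = n - k - 1 := by omega
    rw [hidx]
    have hcast : (((n-k:ℕ)):ℝ) = (n:ℝ) - k := by push_cast [Nat.cast_sub hk'.le]; ring
    rw [hcast]
    push_cast
    linear_combination (-(r * (-r)^k * fall a (n-k-1))) * hchoose
  have hmain : (a:ℝ) * (psi r n (a-1) - psi r n a) + r * (psi r n (a+1) - psi r n a)
      = -(n:ℝ) * psi r n a := by
    rw [hA, hB, hsum, psi, ← Finset.sum_add_distrib, Finset.mul_sum]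
    refine Finset.sum_congr rfl fun k hk => ?_
    have hk' : k ≤ n := Nat.lt_succ_iff.1 (Finset.mem_range.1 hk)
    have hcast : (((n-k:ℕ)):ℝ) = (n:ℝ) - k := by push_cast [Nat.cast_sub hk']; ring
    rw [hcast]; ring
  show (γA / γB) * ((a:ℝ) * (psi r n (a-1) - psi r n a) + r * (psi r n (a+1) - psi r n a))
      = -((n : ℝ) * γA / γB) * psi r n a
  rw [hmain]; ring
end
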